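/- Let A be a commutative ring and q₁, q₂ prime ideals incomparable under inclusion. Suppose p₁ ⊆ q₁ and p₂ ⊆ q₂ are primes such that the up-sets of p₁ and p₂ in Spec(A) are chains, and p₁ + p₂ is a prime ideal. Then p₁ + p₂ = q₁ + q₂. -/
import Mathlib

/-- If `q₁, q₂` are incomparable primes, `p₁ ⊆ q₁` and `p₂ ⊆ q₂` are
primes whose up-sets in Spec(A) are chains, and `p₁ + p₂` is prime, then
`p₁ + p₂ = q₁ + q₂`. -/
theorem sum_eq_sum_of_incomparable {A : Type*} [CommRing A]
    (p₁ p₂ q₁ q₂ : Ideal A)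
    (hp₁ : p₁.IsPrime) (hp₂ : p₂.IsPrime) (hq₁ : q₁.IsPrime) (hq₂ : q₂.IsPrime)
    (hinc : ¬ q₁ ≤ q₂ ∧ ¬ q₂ ≤ q₁)
    (h₁ : p₁ ≤ q₁) (h₂ : p₂ ≤ q₂)
    (hc₁ : ∀ r s : Ideal A, r.IsPrime → s.IsPrime → p₁ ≤ r → p₁ ≤ s → r ≤ s ∨ s ≤ r)
    (hc₂ : ∀ r s : Ideal A, r.IsPrime → s.IsPrime → p₂ ≤ r → p₂ ≤ s → r ≤ s ∨ s ≤ r)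
    (hsum : (p₁ + p₂).IsPrime) :
    p₁ + p₂ = q₁ + q₂ := by
  rw [Ideal.add_eq_sup] at *
  have hs₁ : p₁ ≤ p₁ ⊔ p₂ := le_sup_left
  have hs₂ : p₂ ≤ p₁ ⊔ p₂ := le_sup_right
  -- s comparable with q₁ and q₂
  rcases hc₁ (p₁ ⊔ p₂) q₁ hsum hq₁ hs₁ h₁ with h1 | h1
  · rcases hc₂ (p₁ ⊔ p₂) q₂ hsum hq₂ hs₂ h₂ with h2 | h2
    · -- s ≤ q₁ and s ≤ q₂ : q₁, q₂ both contain p₁ ⇒ comparable, contradiction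
      rcases hc₁ q₁ q₂ hq₁ hq₂ h₁ (le_trans (le_trans hs₁ h2) le_rfl) with h | h
      · exact absurd h hinc.1
      · exact absurd h hinc.2
    · -- s ≤ q₁, q₂ ≤ s ⇒ q₂ ≤ q₁, contradiction
      exact absurd (le_trans h2 h1) hinc.2
  · -- q₁ ≤ s
    rcases hc₂ (p₁ ⊔ p₂) q₂ hsum hq₂ hs₂ h₂ with h2 | h2
    · exact absurd (le_trans h1 h2) hinc.1
    · show p₁ ⊔ p₂ = q₁ ⊔ q₂
      exact le_antisymm (sup_le (h₁.trans le_sup_left) (h₂.trans le_sup_right))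
        (sup_le h1 h2)
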